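/- Suppose K_{3,3} is geodesically immersed in the 2-sphere with exactly 7 crossings, and the adjacent edges 12 and 14 each have no crossings. Then at least one of the edges 36 or 56 also has no crossings. -/

import Mathlib

open scoped Classical

noncomputable section

/-- Points of `ℝ³`. -/
abbrev E3 := EuclideanSpace ℝ (Fin 3)

/-- The interior of the shortest geodesic arc joining `X` and `Y` on the unit
sphere: normalizations of strictly positive combinations of `X` and `Y`. -/
def ArcInt (X Y : E3) : Set E3 :=
  {z | ∃ a b : ℝ, 0 < a ∧ 0 < b ∧ z = ‖a • X + b • Y‖⁻¹ • (a • X + b • Y)}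

/-- Two geodesic edges `XY` and `ZW` on the sphere cross if they share a point
interior to both. -/
def Crosses (X Y Z W : E3) : Prop := (ArcInt X Y ∩ ArcInt Z W).Nonempty

/-- Vertices of `K₃,₃`: indices `0,2,4` form one part (labels `1,3,5`). -/
def oI : Fin 3 → Fin 6 := ![0, 2, 4]

/-- Indices `1,3,5` form the other part (labels `2,4,6`). -/
def eI : Fin 3 → Fin 6 := ![1, 3, 5]

/-- A geodesic immersion of `K₃,₃` in the unit sphere: all vertices are unit
vectors and no three of them lie on a common great circle. -/
def GoodImm (v : Fin 6 → E3) : Prop :=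
  (∀ i, ‖v i‖ = 1) ∧
    ∀ i j k : Fin 6, i ≠ j → i ≠ k → j ≠ k → LinearIndependent ℝ ![v i, v j, v k]

namespace K33Aux

def det3 (X Y Z : E3) : ℝ :=
  X 0 * (Y 1 * Z 2 - Y 2 * Z 1) - X 1 * (Y 0 * Z 2 - Y 2 * Z 0) + X 2 * (Y 0 * Z 1 - Y 1 * Z 0)

lemma det3_comb (a b : ℝ) (X Y Z W : E3) :
    det3 ((a • X + b • Y : E3)) Z W = a * det3 X Z W + b * det3 Y Z W := by
  simp only [det3, PiLp.add_apply, PiLp.smul_apply, smul_eq_mul]; ring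

lemma det3_swap23 (X Y Z : E3) : det3 X Z Y = - det3 X Y Z := by simp only [det3]; ring
lemma det3_swap12 (X Y Z : E3) : det3 Y X Z = - det3 X Y Z := by simp only [det3]; ring
lemma det3_swap13 (X Y Z : E3) : det3 Z Y X = - det3 X Y Z := by simp only [det3]; ring
lemma det3_cyc (X Y Z : E3) : det3 Y Z X = det3 X Y Z := by simp only [det3]; ring
lemma det3_cyc' (X Y Z : E3) : det3 Z X Y = det3 X Y Z := by simp only [det3]; ring
lemma det3_self12 (X Z : E3) : det3 X X Z = 0 := by simp only [det3]; ring
lemma det3_self13 (X Z : E3) : det3 X Z X = 0 := by simp only [det3]; ring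

lemma det3_ne_zero {X Y Z : E3} (h : LinearIndependent ℝ ![X, Y, Z]) : det3 X Y Z ≠ 0 := by
  intro h0
  have hM : (Matrix.of ![(X : Fin 3 → ℝ), Y, Z]).det = 0 := by
    rw [Matrix.det_fin_three]
    simp only [Matrix.of_apply, Matrix.cons_val', Matrix.cons_val_zero, Matrix.cons_val_one,
      Matrix.head_cons, Matrix.cons_val_two, Matrix.tail_cons, Matrix.empty_val',
      Matrix.cons_val_fin_one, Matrix.head_fin_const]
    rw [det3] at h0; linarith
  obtain ⟨g, hg0, hg⟩ := Matrix.exists_vecMul_eq_zero_iff.mpr hM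
  have hli := Fintype.linearIndependent_iff.mp h g
  have hcomb : ∑ i : Fin 3, g i • ![X, Y, Z] i = 0 := by
    ext j
    have := congrFun hg j
    simp only [Matrix.vecMul, dotProduct, Fin.sum_univ_three] at this
    simpa [Fin.sum_univ_three, PiLp.add_apply, PiLp.smul_apply, smul_eq_mul] using this
  exact hg0 (funext fun i => hli hcomb i)

lemma e3_ext {u w : E3} (h0 : u 0 = w 0) (h1 : u 1 = w 1) (h2 : u 2 = w 2) : u = w := by
  ext j
  fin_cases j
  · exact h0
  · exact h1
  · exact h2

lemma cramer4 (X Y Z W : E3) :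
    (-(det3 Y Z W)) • X + det3 X Z W • Y = (det3 X Y W) • Z + (-(det3 X Y Z)) • W := by
  apply e3_ext <;>
    · simp only [PiLp.add_apply, PiLp.smul_apply, smul_eq_mul, det3]; ring

lemma comb_ne_zero {X Y W : E3} (h : det3 X Y W ≠ 0) {a b : ℝ} (hab : a ≠ 0 ∨ b ≠ 0) :
    a • X + b • Y ≠ 0 := by
  intro h0
  have hda : a * det3 X Y W + b * det3 Y Y W = 0 := by
    rw [← det3_comb, h0]; simp only [det3, PiLp.zero_apply]; ring
  have hdb : a * det3 X X W + b * det3 Y X W = 0 := by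
    rw [← det3_comb, h0]; simp only [det3, PiLp.zero_apply]; ring
  rw [det3_self12] at hda hdb
  rw [det3_swap12] at hdb
  rcases hab with ha | hb
  · exact h (by
      have h' : a * det3 X Y W = 0 := by linarith
      rcases mul_eq_zero.mp h' with h'' | h'' <;> [exact absurd h'' ha; exact h''])
  · exact h (by
      have h' : b * det3 X Y W = 0 := by linarith
      rcases mul_eq_zero.mp h' with h'' | h'' <;> [exact absurd h'' hb; exact h''])

lemma crosses_symm {X Y Z W : E3} (h : Crosses X Y Z W) : Crosses Z W X Y := by
  obtain ⟨z, h1, h2⟩ := h; exact ⟨z, h2, h1⟩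

lemma crosses_elim {X Y Z W : E3}
    (hu : ∀ a b : ℝ, 0 < a → 0 < b → a • X + b • Y ≠ 0)
    (hw : ∀ c d : ℝ, 0 < c → 0 < d → c • Z + d • W ≠ 0)
    (h : Crosses X Y Z W) :
    ∃ a b c d : ℝ, 0 < a ∧ 0 < b ∧ 0 < c ∧ 0 < d ∧ a • X + b • Y = c • Z + d • W := by
  obtain ⟨z, ⟨a, b, ha, hb, hz⟩, ⟨c, d, hc, hd, hz'⟩⟩ := h
  have hun : (0:ℝ) < ‖a • X + b • Y‖ := norm_pos_iff.mpr (hu a b ha hb)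
  have hwn : (0:ℝ) < ‖c • Z + d • W‖ := norm_pos_iff.mpr (hw c d hc hd)
  have key : a • X + b • Y = (‖a • X + b • Y‖ * ‖c • Z + d • W‖⁻¹) • (c • Z + d • W) := by
    have h2 : ‖a • X + b • Y‖⁻¹ • (a • X + b • Y) = ‖c • Z + d • W‖⁻¹ • (c • Z + d • W) := by
      rw [← hz, ← hz']
    calc a • X + b • Y = ‖a • X + b • Y‖ • (‖a • X + b • Y‖⁻¹ • (a • X + b • Y)) := by
          rw [smul_smul, mul_inv_cancel₀ hun.ne', one_smul]
      _ = ‖a • X + b • Y‖ • (‖c • Z + d • W‖⁻¹ • (c • Z + d • W)) := by rw [h2]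
      _ = _ := by rw [smul_smul]
  refine ⟨a, b, ‖a • X + b • Y‖ * ‖c • Z + d • W‖⁻¹ * c,
    ‖a • X + b • Y‖ * ‖c • Z + d • W‖⁻¹ * d, ha, hb, by positivity, by positivity, ?_⟩
  exact key.trans (by rw [smul_add, smul_smul, smul_smul])

lemma lin_sign_pos {a c x y : ℝ} (ha : 0 < a) (hc : 0 < c) (e : a * x + c * y = 0)
    (hx : x < 0) : 0 < y := by nlinarith

lemma lin_sign_neg {a c x y : ℝ} (ha : 0 < a) (hc : 0 < c) (e : a * x + c * y = 0)
    (hx : 0 < x) : y < 0 := by nlinarith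

lemma crosses_iff {X Y Z W : E3}
    (h1 : det3 X Y W ≠ 0) (h2 : det3 X Z W ≠ 0) (h3 : det3 X Y Z ≠ 0) (h4 : det3 Y Z W ≠ 0) :
    Crosses X Y Z W ↔
      ((0 < det3 X Y W ∧ 0 < det3 X Z W ∧ det3 X Y Z < 0 ∧ det3 Y Z W < 0) ∨
        (det3 X Y W < 0 ∧ det3 X Z W < 0 ∧ 0 < det3 X Y Z ∧ 0 < det3 Y Z W)) := by
  constructor
  · intro hc
    have hu : ∀ a b : ℝ, 0 < a → 0 < b → a • X + b • Y ≠ 0 :=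
      fun a b ha _ => comb_ne_zero h1 (Or.inl ha.ne')
    have hZWX : det3 Z W X ≠ 0 := by rw [det3_cyc X Z W]; exact h2
    have hw : ∀ c d : ℝ, 0 < c → 0 < d → c • Z + d • W ≠ 0 :=
      fun c d hc' _ => comb_ne_zero hZWX (Or.inl hc'.ne')
    obtain ⟨a, b, c, d, ha, hb, hc', hd', key⟩ := crosses_elim hu hw hc
    have eZW : a * det3 X Z W + b * det3 Y Z W = 0 := by
      have e := congrArg (fun u : E3 => det3 u Z W) key
      simp only [det3_comb] at e
      rw [det3_self12 Z W, det3_self13 W Z] at e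
      linarith
    have eYW : a * det3 X Y W + c * det3 Y Z W = 0 := by
      have e := congrArg (fun u : E3 => det3 u Y W) key
      simp only [det3_comb] at e
      rw [det3_self12 Y W, det3_self13 W Y, det3_swap12 Y Z W] at e
      linarith
    have eXZ : b * det3 X Y Z + d * det3 X Z W = 0 := by
      have e := congrArg (fun u : E3 => det3 u X Z) key
      simp only [det3_comb] at e
      rw [det3_self12 X Z, det3_self13 Z X, det3_swap12 X Y Z, det3_cyc' X Z W] at e
      linarith
    rcases h1.lt_or_gt with hp | hp
    · have q4 : 0 < det3 Y Z W := lin_sign_pos ha hc' eYW hp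
      have q2 : det3 X Z W < 0 := by
        have := lin_sign_neg hb ha (by linarith : b * det3 Y Z W + a * det3 X Z W = 0) q4
        linarith
      have q3 : 0 < det3 X Y Z := by
        have := lin_sign_pos hd' hb (by linarith : d * det3 X Z W + b * det3 X Y Z = 0) q2
        linarith
      exact Or.inr ⟨hp, q2, q3, q4⟩
    · have q4 : det3 Y Z W < 0 := lin_sign_neg ha hc' eYW hp
      have q2 : 0 < det3 X Z W := by
        have := lin_sign_pos hb ha (by linarith : b * det3 Y Z W + a * det3 X Z W = 0) q4
        linarith
      have q3 : det3 X Y Z < 0 := by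
        have := lin_sign_neg hd' hb (by linarith : d * det3 X Z W + b * det3 X Y Z = 0) q2
        linarith
      exact Or.inl ⟨hp, q2, q3, q4⟩
  · rintro (⟨p1, p2, p3, p4⟩ | ⟨p1, p2, p3, p4⟩)
    · refine ⟨‖(-(det3 Y Z W)) • X + det3 X Z W • Y‖⁻¹ •
          ((-(det3 Y Z W)) • X + det3 X Z W • Y),
        ⟨-(det3 Y Z W), det3 X Z W, by linarith, p2, rfl⟩,
        ⟨det3 X Y W, -(det3 X Y Z), p1, by linarith, ?_⟩⟩
      rw [← cramer4 X Y Z W]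
    · refine ⟨‖(det3 Y Z W) • X + (-(det3 X Z W)) • Y‖⁻¹ •
          ((det3 Y Z W) • X + (-(det3 X Z W)) • Y),
        ⟨det3 Y Z W, -(det3 X Z W), p4, by linarith, rfl⟩,
        ⟨-(det3 X Y W), det3 X Y Z, by linarith, p3, ?_⟩⟩
      have key2 : (det3 Y Z W) • X + (-(det3 X Z W)) • Y
          = (-(det3 X Y W)) • Z + det3 X Y Z • W := by
        apply e3_ext <;>
          · simp only [PiLp.add_apply, PiLp.smul_apply, smul_eq_mul, det3]; ring
      rw [key2]

lemma noCross_shareL {X Y W : E3} (h : det3 X Y W ≠ 0) : ¬ Crosses X Y X W := by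
  intro hc
  have hu : ∀ a b : ℝ, 0 < a → 0 < b → a • X + b • Y ≠ 0 :=
    fun a b ha _ => comb_ne_zero h (Or.inl ha.ne')
  have hXWY : det3 X W Y ≠ 0 := by rw [det3_swap23]; exact neg_ne_zero.mpr h
  have hw : ∀ c d : ℝ, 0 < c → 0 < d → c • X + d • W ≠ 0 :=
    fun c d hc' _ => comb_ne_zero hXWY (Or.inl hc'.ne')
  obtain ⟨a, b, c, d, ha, hb, hc', hd', key⟩ := crosses_elim hu hw hc
  have e := congrArg (fun u : E3 => det3 u X W) key
  simp only [det3_comb] at e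
  rw [det3_self12 X W, det3_self13 W X, det3_swap12 X Y W] at e
  have : b * det3 X Y W = 0 := by linarith
  rcases mul_eq_zero.mp this with h' | h'
  · exact hb.ne' h'
  · exact h h'

lemma noCross_shareR {X Y Z : E3} (h : det3 X Y Z ≠ 0) : ¬ Crosses X Y Z Y := by
  intro hc
  have hu : ∀ a b : ℝ, 0 < a → 0 < b → a • X + b • Y ≠ 0 :=
    fun a b ha _ => comb_ne_zero h (Or.inl ha.ne')
  have hZYX : det3 Z Y X ≠ 0 := by rw [det3_swap13]; exact neg_ne_zero.mpr h
  have hw : ∀ c d : ℝ, 0 < c → 0 < d → c • Z + d • Y ≠ 0 :=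
    fun c d hc' _ => comb_ne_zero hZYX (Or.inl hc'.ne')
  obtain ⟨a, b, c, d, ha, hb, hc', hd', key⟩ := crosses_elim hu hw hc
  have e := congrArg (fun u : E3 => det3 u Y Z) key
  simp only [det3_comb] at e
  rw [det3_self12 Y Z, det3_self13 Z Y] at e
  have : a * det3 X Y Z = 0 := by linarith
  rcases mul_eq_zero.mp this with h' | h'
  · exact ha.ne' h'
  · exact h h'

lemma cycle_excl {X Y Z W : E3}
    (h1 : det3 X Y W ≠ 0) (h2 : det3 X Z W ≠ 0) (h3 : det3 X Y Z ≠ 0) (h4 : det3 Y Z W ≠ 0) :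
    ¬ (Crosses X Y Z W ∧ Crosses X W Z Y) := by
  rintro ⟨hA, hB⟩
  rw [crosses_iff h1 h2 h3 h4] at hA
  have h1' : det3 X W Y ≠ 0 := by rw [det3_swap23 X Y W]; exact neg_ne_zero.mpr h1
  have h2' : det3 X Z Y ≠ 0 := by rw [det3_swap23 X Y Z]; exact neg_ne_zero.mpr h3
  have h3' : det3 X W Z ≠ 0 := by rw [det3_swap23 X Z W]; exact neg_ne_zero.mpr h2
  have h4' : det3 W Z Y ≠ 0 := by rw [det3_swap13 Y Z W]; exact neg_ne_zero.mpr h4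
  rw [crosses_iff h1' h2' h3' h4'] at hB
  have e1 : det3 X W Y = -det3 X Y W := det3_swap23 X Y W
  have e2 : det3 X Z Y = -det3 X Y Z := det3_swap23 X Y Z
  have e3 : det3 X W Z = -det3 X Z W := det3_swap23 X Z W
  have e4 : det3 W Z Y = -det3 Y Z W := det3_swap13 Y Z W
  rcases hA with ⟨a1, a2, a3, a4⟩ | ⟨a1, a2, a3, a4⟩ <;>
    rcases hB with ⟨b1, b2, b3, b4⟩ | ⟨b1, b2, b3, b4⟩ <;> linarith

lemma final (w : Fin 6 → E3)
    (hD : ∀ i j k : Fin 6, i ≠ j → i ≠ k → j ≠ k → det3 (w i) (w j) (w k) ≠ 0)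
    (hK1 : Crosses (w 0) (w 5) (w 4) (w 1))
    (hK2 : Crosses (w 0) (w 5) (w 4) (w 3))
    (hK3 : Crosses (w 2) (w 5) (w 4) (w 1))
    (hK4 : Crosses (w 2) (w 3) (w 4) (w 5)) : False := by
  rw [crosses_iff (hD 0 5 1 (by decide) (by decide) (by decide))
    (hD 0 4 1 (by decide) (by decide) (by decide))
    (hD 0 5 4 (by decide) (by decide) (by decide))
    (hD 5 4 1 (by decide) (by decide) (by decide))] at hK1
  rw [crosses_iff (hD 0 5 3 (by decide) (by decide) (by decide))
    (hD 0 4 3 (by decide) (by decide) (by decide))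
    (hD 0 5 4 (by decide) (by decide) (by decide))
    (hD 5 4 3 (by decide) (by decide) (by decide))] at hK2
  rw [crosses_iff (hD 2 5 1 (by decide) (by decide) (by decide))
    (hD 2 4 1 (by decide) (by decide) (by decide))
    (hD 2 5 4 (by decide) (by decide) (by decide))
    (hD 5 4 1 (by decide) (by decide) (by decide))] at hK3
  rw [crosses_iff (hD 2 3 5 (by decide) (by decide) (by decide))
    (hD 2 4 5 (by decide) (by decide) (by decide))
    (hD 2 3 4 (by decide) (by decide) (by decide))
    (hD 3 4 5 (by decide) (by decide) (by decide))] at hK4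
  have e1 : det3 (w 5) (w 4) (w 3) = -det3 (w 3) (w 4) (w 5) := det3_swap13 (w 3) (w 4) (w 5)
  have e2 : det3 (w 2) (w 5) (w 4) = -det3 (w 2) (w 4) (w 5) := det3_swap23 (w 2) (w 4) (w 5)
  rcases hK1 with ⟨a1, a2, a3, a4⟩ | ⟨a1, a2, a3, a4⟩ <;>
    rcases hK2 with ⟨b1, b2, b3, b4⟩ | ⟨b1, b2, b3, b4⟩ <;>
      rcases hK3 with ⟨c1, c2, c3, c4⟩ | ⟨c1, c2, c3, c4⟩ <;>
        rcases hK4 with ⟨d1, d2, d3, d4⟩ | ⟨d1, d2, d3, d4⟩ <;> linarith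

end K33Aux

/-- The number of crossings of the immersion: the number of unordered pairs of
disjoint edges whose geodesic arcs cross.  An edge is a pair `(a, b)`, joining
vertex `oI a` to vertex `eI b`. -/
def crossingCount (v : Fin 6 → E3) : ℕ :=
  (Finset.univ.filter fun p : (Fin 3 × Fin 3) × (Fin 3 × Fin 3) =>
    p.1.1 < p.2.1 ∧ p.1.2 ≠ p.2.2 ∧
      Crosses (v (oI p.1.1)) (v (eI p.1.2)) (v (oI p.2.1)) (v (eI p.2.2))).card

/-- The edge `(a,b)` of `K₃,₃` has no crossings with any other edge. -/
def EdgeFree (v : Fin 6 → E3) (p : Fin 3 × Fin 3) : Prop :=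
  ∀ q : Fin 3 × Fin 3, q ≠ p →
    ¬ Crosses (v (oI p.1)) (v (eI p.2)) (v (oI q.1)) (v (eI q.2))

/-- If `K₃,₃` is geodesically immersed in the sphere with exactly 7 crossings and
the adjacent edges `12` (edge `(0,0)`) and `14` (edge `(0,1)`) each have no
crossings, then edge `36` (edge `(1,2)`) or edge `56` (edge `(2,2)`) also has no
crossings. -/
theorem K33_seven_crossings_adjacent_free (v : Fin 6 → E3) (h : GoodImm v)
    (h7 : crossingCount v = 7)
    (h12 : EdgeFree v (0, 0)) (h14 : EdgeFree v (0, 1)) :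
    EdgeFree v (1, 2) ∨ EdgeFree v (2, 2) := by
  classical
  by_contra hcon
  push_neg at hcon
  obtain ⟨hn36, hn56⟩ := hcon
  have hD : ∀ i j k : Fin 6, i ≠ j → i ≠ k → j ≠ k → K33Aux.det3 (v i) (v j) (v k) ≠ 0 :=
    fun i j k hij hik hjk => K33Aux.det3_ne_zero (h.2 i j k hij hik hjk)
  -- Step A: the crossing partner of edge 36
  have hA : Crosses (v 2) (v 5) (v 4) (v 1) ∨ Crosses (v 2) (v 5) (v 4) (v 3) := by
    simp only [EdgeFree] at hn36
    push_neg at hn36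
    obtain ⟨q, hq, hcr⟩ := hn36
    fin_cases q
    · exact absurd (K33Aux.crosses_symm hcr) (h12 (1, 2) (by decide))
    · exact absurd (K33Aux.crosses_symm hcr) (h14 (1, 2) (by decide))
    · exact absurd hcr (K33Aux.noCross_shareR (hD 2 5 0 (by decide) (by decide) (by decide)))
    · exact absurd hcr (K33Aux.noCross_shareL (hD 2 5 1 (by decide) (by decide) (by decide)))
    · exact absurd hcr (K33Aux.noCross_shareL (hD 2 5 3 (by decide) (by decide) (by decide)))
    · exact absurd rfl hq
    · exact Or.inl hcr
    · exact Or.inr hcr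
    · exact absurd hcr (K33Aux.noCross_shareR (hD 2 5 4 (by decide) (by decide) (by decide)))
  -- Step B: the crossing partner of edge 56
  have hB : Crosses (v 4) (v 5) (v 2) (v 1) ∨ Crosses (v 4) (v 5) (v 2) (v 3) := by
    simp only [EdgeFree] at hn56
    push_neg at hn56
    obtain ⟨q, hq, hcr⟩ := hn56
    fin_cases q
    · exact absurd (K33Aux.crosses_symm hcr) (h12 (2, 2) (by decide))
    · exact absurd (K33Aux.crosses_symm hcr) (h14 (2, 2) (by decide))
    · exact absurd hcr (K33Aux.noCross_shareR (hD 4 5 0 (by decide) (by decide) (by decide)))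
    · exact Or.inl hcr
    · exact Or.inr hcr
    · exact absurd hcr (K33Aux.noCross_shareR (hD 4 5 2 (by decide) (by decide) (by decide)))
    · exact absurd hcr (K33Aux.noCross_shareL (hD 4 5 1 (by decide) (by decide) (by decide)))
    · exact absurd hcr (K33Aux.noCross_shareL (hD 4 5 3 (by decide) (by decide) (by decide)))
    · exact absurd rfl hq
  -- Step C: counting machinery
  have hsub : ∀ p : (Fin 3 × Fin 3) × (Fin 3 × Fin 3),
      (p.1.1 < p.2.1 ∧ p.1.2 ≠ p.2.2 ∧
        Crosses (v (oI p.1.1)) (v (eI p.1.2)) (v (oI p.2.1)) (v (eI p.2.2))) →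
      p ∈ ({((0,2),(1,0)), ((0,2),(1,1)), ((0,2),(2,0)), ((0,2),(2,1)),
            ((1,0),(2,1)), ((1,0),(2,2)), ((1,1),(2,0)), ((1,1),(2,2)),
            ((1,2),(2,0)), ((1,2),(2,1))} :
            Finset ((Fin 3 × Fin 3) × (Fin 3 × Fin 3))) := by
    rintro ⟨⟨a, b⟩, ⟨c, d⟩⟩ ⟨hlt, hne, hcr⟩
    fin_cases a <;> fin_cases b <;> fin_cases c <;> fin_cases d
    · exact absurd hlt (by decide)
    · exact absurd hlt (by decide)
    · exact absurd hlt (by decide)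
    · exact absurd rfl hne
    · exact ((h12 (1, 1) (by decide) hcr).elim)
    · exact ((h12 (1, 2) (by decide) hcr).elim)
    · exact absurd rfl hne
    · exact ((h12 (2, 1) (by decide) hcr).elim)
    · exact ((h12 (2, 2) (by decide) hcr).elim)
    · exact absurd hlt (by decide)
    · exact absurd hlt (by decide)
    · exact absurd hlt (by decide)
    · exact ((h14 (1, 0) (by decide) hcr).elim)
    · exact absurd rfl hne
    · exact ((h14 (1, 2) (by decide) hcr).elim)
    · exact ((h14 (2, 0) (by decide) hcr).elim)
    · exact absurd rfl hne
    · exact ((h14 (2, 2) (by decide) hcr).elim)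
    · exact absurd hlt (by decide)
    · exact absurd hlt (by decide)
    · exact absurd hlt (by decide)
    · decide
    · decide
    · exact absurd rfl hne
    · decide
    · decide
    · exact absurd rfl hne
    · exact absurd hlt (by decide)
    · exact absurd hlt (by decide)
    · exact absurd hlt (by decide)
    · exact absurd hlt (by decide)
    · exact absurd hlt (by decide)
    · exact absurd hlt (by decide)
    · exact absurd rfl hne
    · decide
    · decide
    · exact absurd hlt (by decide)
    · exact absurd hlt (by decide)
    · exact absurd hlt (by decide)
    · exact absurd hlt (by decide)
    · exact absurd hlt (by decide)
    · exact absurd hlt (by decide)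
    · decide
    · exact absurd rfl hne
    · decide
    · exact absurd hlt (by decide)
    · exact absurd hlt (by decide)
    · exact absurd hlt (by decide)
    · exact absurd hlt (by decide)
    · exact absurd hlt (by decide)
    · exact absurd hlt (by decide)
    · decide
    · decide
    · exact absurd rfl hne
    · exact absurd hlt (by decide)
    · exact absurd hlt (by decide)
    · exact absurd hlt (by decide)
    · exact absurd hlt (by decide)
    · exact absurd hlt (by decide)
    · exact absurd hlt (by decide)
    · exact absurd hlt (by decide)
    · exact absurd hlt (by decide)
    · exact absurd hlt (by decide)
    · exact absurd hlt (by decide)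
    · exact absurd hlt (by decide)
    · exact absurd hlt (by decide)
    · exact absurd hlt (by decide)
    · exact absurd hlt (by decide)
    · exact absurd hlt (by decide)
    · exact absurd hlt (by decide)
    · exact absurd hlt (by decide)
    · exact absurd hlt (by decide)
    · exact absurd hlt (by decide)
    · exact absurd hlt (by decide)
    · exact absurd hlt (by decide)
    · exact absurd hlt (by decide)
    · exact absurd hlt (by decide)
    · exact absurd hlt (by decide)
    · exact absurd hlt (by decide)
    · exact absurd hlt (by decide)
    · exact absurd hlt (by decide)
  have key4 : ∀ x1 x2 x3 x4 : (Fin 3 × Fin 3) × (Fin 3 × Fin 3),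
      (¬ Crosses (v (oI x1.1.1)) (v (eI x1.1.2)) (v (oI x1.2.1)) (v (eI x1.2.2))) →
      (¬ Crosses (v (oI x2.1.1)) (v (eI x2.1.2)) (v (oI x2.2.1)) (v (eI x2.2.2))) →
      (¬ Crosses (v (oI x3.1.1)) (v (eI x3.1.2)) (v (oI x3.2.1)) (v (eI x3.2.2))) →
      (¬ Crosses (v (oI x4.1.1)) (v (eI x4.1.2)) (v (oI x4.2.1)) (v (eI x4.2.2))) →
      7 ≤ ((({((0,2),(1,0)), ((0,2),(1,1)), ((0,2),(2,0)), ((0,2),(2,1)),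
            ((1,0),(2,1)), ((1,0),(2,2)), ((1,1),(2,0)), ((1,1),(2,2)),
            ((1,2),(2,0)), ((1,2),(2,1))} :
            Finset ((Fin 3 × Fin 3) × (Fin 3 × Fin 3)))) \ {x1, x2, x3, x4}).card := by
    intro x1 x2 x3 x4 hx1 hx2 hx3 hx4
    rw [← h7]
    unfold crossingCount
    apply Finset.card_le_card
    intro p hp
    rw [Finset.mem_filter] at hp
    obtain ⟨-, hp⟩ := hp
    rw [Finset.mem_sdiff]
    refine ⟨hsub p hp, ?_⟩
    intro hmem
    simp only [Finset.mem_insert, Finset.mem_singleton] at hmem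
    rcases hmem with rfl | rfl | rfl | rfl
    · exact hx1 hp.2.2
    · exact hx2 hp.2.2
    · exact hx3 hp.2.2
    · exact hx4 hp.2.2
  -- Step D: case analysis
  rcases hA with hA | hA <;> rcases hB with hB | hB
  · -- both cross with right vertex 2 (index 1): one quadrilateral, two crossings
    exact K33Aux.cycle_excl (hD 2 5 1 (by decide) (by decide) (by decide))
      (hD 2 4 1 (by decide) (by decide) (by decide))
      (hD 2 5 4 (by decide) (by decide) (by decide))
      (hD 5 4 1 (by decide) (by decide) (by decide)) ⟨hA, K33Aux.crosses_symm hB⟩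
  · -- 36 crosses 52, 56 crosses 34
    have hP8 : Crosses (v 2) (v 3) (v 4) (v 5) := K33Aux.crosses_symm hB
    have hf6 : ¬ Crosses (v 2) (v 1) (v 4) (v 5) := fun hc =>
      K33Aux.cycle_excl (hD 2 1 5 (by decide) (by decide) (by decide))
        (hD 2 4 5 (by decide) (by decide) (by decide))
        (hD 2 1 4 (by decide) (by decide) (by decide))
        (hD 1 4 5 (by decide) (by decide) (by decide)) ⟨hc, hA⟩
    have hf10 : ¬ Crosses (v 2) (v 5) (v 4) (v 3) := fun hc =>
      K33Aux.cycle_excl (hD 2 3 5 (by decide) (by decide) (by decide))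
        (hD 2 4 5 (by decide) (by decide) (by decide))
        (hD 2 3 4 (by decide) (by decide) (by decide))
        (hD 3 4 5 (by decide) (by decide) (by decide)) ⟨hP8, hc⟩
    have hK1 : Crosses (v 0) (v 5) (v 4) (v 1) := by
      by_contra hn
      by_cases hx : Crosses (v 2) (v 1) (v 4) (v 3)
      · have hf7 : ¬ Crosses (v 2) (v 3) (v 4) (v 1) := fun hc =>
          K33Aux.cycle_excl (hD 2 1 3 (by decide) (by decide) (by decide))
            (hD 2 4 3 (by decide) (by decide) (by decide))
            (hD 2 1 4 (by decide) (by decide) (by decide))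
            (hD 1 4 3 (by decide) (by decide) (by decide)) ⟨hx, hc⟩
        exact absurd (key4 ((0,2),(2,0)) ((1,0),(2,2)) ((1,2),(2,1)) ((1,1),(2,0))
          hn hf6 hf10 hf7) (by decide)
      · exact absurd (key4 ((0,2),(2,0)) ((1,0),(2,2)) ((1,2),(2,1)) ((1,0),(2,1))
          hn hf6 hf10 hx) (by decide)
    have hK2 : Crosses (v 0) (v 5) (v 4) (v 3) := by
      by_contra hn
      by_cases hx : Crosses (v 2) (v 1) (v 4) (v 3)
      · have hf7 : ¬ Crosses (v 2) (v 3) (v 4) (v 1) := fun hc =>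
          K33Aux.cycle_excl (hD 2 1 3 (by decide) (by decide) (by decide))
            (hD 2 4 3 (by decide) (by decide) (by decide))
            (hD 2 1 4 (by decide) (by decide) (by decide))
            (hD 1 4 3 (by decide) (by decide) (by decide)) ⟨hx, hc⟩
        exact absurd (key4 ((0,2),(2,1)) ((1,0),(2,2)) ((1,2),(2,1)) ((1,1),(2,0))
          hn hf6 hf10 hf7) (by decide)
      · exact absurd (key4 ((0,2),(2,1)) ((1,0),(2,2)) ((1,2),(2,1)) ((1,0),(2,1))
          hn hf6 hf10 hx) (by decide)
    exact K33Aux.final v hD hK1 hK2 hA hP8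
  · -- 36 crosses 54, 56 crosses 32
    have hP6 : Crosses (v 2) (v 1) (v 4) (v 5) := K33Aux.crosses_symm hB
    have hf9 : ¬ Crosses (v 2) (v 5) (v 4) (v 1) := fun hc =>
      K33Aux.cycle_excl (hD 2 1 5 (by decide) (by decide) (by decide))
        (hD 2 4 5 (by decide) (by decide) (by decide))
        (hD 2 1 4 (by decide) (by decide) (by decide))
        (hD 1 4 5 (by decide) (by decide) (by decide)) ⟨hP6, hc⟩
    have hf8 : ¬ Crosses (v 2) (v 3) (v 4) (v 5) := fun hc =>
      K33Aux.cycle_excl (hD 2 3 5 (by decide) (by decide) (by decide))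
        (hD 2 4 5 (by decide) (by decide) (by decide))
        (hD 2 3 4 (by decide) (by decide) (by decide))
        (hD 3 4 5 (by decide) (by decide) (by decide)) ⟨hc, hA⟩
    have hK1 : Crosses (v 0) (v 5) (v 4) (v 1) := by
      by_contra hn
      by_cases hx : Crosses (v 2) (v 1) (v 4) (v 3)
      · have hf7 : ¬ Crosses (v 2) (v 3) (v 4) (v 1) := fun hc =>
          K33Aux.cycle_excl (hD 2 1 3 (by decide) (by decide) (by decide))
            (hD 2 4 3 (by decide) (by decide) (by decide))
            (hD 2 1 4 (by decide) (by decide) (by decide))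
            (hD 1 4 3 (by decide) (by decide) (by decide)) ⟨hx, hc⟩
        exact absurd (key4 ((0,2),(2,0)) ((1,2),(2,0)) ((1,1),(2,2)) ((1,1),(2,0))
          hn hf9 hf8 hf7) (by decide)
      · exact absurd (key4 ((0,2),(2,0)) ((1,2),(2,0)) ((1,1),(2,2)) ((1,0),(2,1))
          hn hf9 hf8 hx) (by decide)
    have hK2 : Crosses (v 0) (v 5) (v 4) (v 3) := by
      by_contra hn
      by_cases hx : Crosses (v 2) (v 1) (v 4) (v 3)
      · have hf7 : ¬ Crosses (v 2) (v 3) (v 4) (v 1) := fun hc =>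
          K33Aux.cycle_excl (hD 2 1 3 (by decide) (by decide) (by decide))
            (hD 2 4 3 (by decide) (by decide) (by decide))
            (hD 2 1 4 (by decide) (by decide) (by decide))
            (hD 1 4 3 (by decide) (by decide) (by decide)) ⟨hx, hc⟩
        exact absurd (key4 ((0,2),(2,1)) ((1,2),(2,0)) ((1,1),(2,2)) ((1,1),(2,0))
          hn hf9 hf8 hf7) (by decide)
      · exact absurd (key4 ((0,2),(2,1)) ((1,2),(2,0)) ((1,1),(2,2)) ((1,0),(2,1))
          hn hf9 hf8 hx) (by decide)
    have hinj : Function.Injective (![0, 3, 2, 1, 4, 5] : Fin 6 → Fin 6) := by decide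
    exact K33Aux.final (fun i => v ((![0, 3, 2, 1, 4, 5] : Fin 6 → Fin 6) i))
      (fun i j k hij hik hjk =>
        hD _ _ _ (fun e => hij (hinj e)) (fun e => hik (hinj e)) (fun e => hjk (hinj e)))
      hK2 hK1 hA hP6
  · -- both cross with right vertex 4 (index 3)
    exact K33Aux.cycle_excl (hD 2 5 3 (by decide) (by decide) (by decide))
      (hD 2 4 3 (by decide) (by decide) (by decide))
      (hD 2 5 4 (by decide) (by decide) (by decide))
      (hD 5 4 3 (by decide) (by decide) (by decide)) ⟨hA, K33Aux.crosses_symm hB⟩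

end
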